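/- Let R be an integral domain that is a finitely generated ℂ-algebra, a unique factorization domain, and has Krull dimension 3. Let D : Derivation ℂ R R be a nonzero locally nilpotent derivation (for every r ∈ R there exists n ∈ ℕ with D^[n] r = 0), and let A = ker D = {r ∈ R | D r = 0} be the invariant subalgebra. If g ∈ A is a prime element of the ring A, then g, regarded as an element of R, is a prime element of R. -/

import Mathlib

open Finset in
lemma derivation_iterate_leibniz {R : Type*} [CommRing R] [Algebra ℂ R]
    (D : Derivation ℂ R R) (p q : R) (n : ℕ) :
    (⇑D)^[n] (p * q) =
      ∑ k ∈ range n.succ, (n.choose k • ((⇑D)^[n - k] p * (⇑D)^[k] q)) := by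
  induction n with
  | zero => simp [Finset.range]
  | succ n IH =>
    calc
      (⇑D)^[n + 1] (p * q) =
          D (∑ k ∈ range n.succ,
              n.choose k • ((⇑D)^[n - k] p * (⇑D)^[k] q)) := by
        rw [Function.iterate_succ_apply', IH]
      _ = (∑ k ∈ range n.succ,
            n.choose k • ((⇑D)^[n - k + 1] p * (⇑D)^[k] q)) +
          ∑ k ∈ range n.succ,
            n.choose k • ((⇑D)^[n - k] p * (⇑D)^[k + 1] q) := by
        rw [map_sum]
        simp_rw [map_nsmul, Derivation.leibniz, smul_eq_mul, Function.iterate_succ_apply',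
          smul_add, sum_add_distrib]
        ring_nf
        congr 1 <;> exact Finset.sum_congr rfl fun k hk => by ring
      _ = (∑ k ∈ range n.succ,
                n.choose k.succ • ((⇑D)^[n - k] p * (⇑D)^[k + 1] q)) +
              1 • ((⇑D)^[n + 1] p * (⇑D)^[0] q) +
            ∑ k ∈ range n.succ, n.choose k • ((⇑D)^[n - k] p * (⇑D)^[k + 1] q) :=
        ?_
      _ = ((∑ k ∈ range n.succ, n.choose k • ((⇑D)^[n - k] p * (⇑D)^[k + 1] q)) +
              ∑ k ∈ range n.succ,
                n.choose k.succ • ((⇑D)^[n - k] p * (⇑D)^[k + 1] q)) +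
            1 • ((⇑D)^[n + 1] p * (⇑D)^[0] q) := by
        rw [add_comm, add_assoc]
      _ = (∑ i ∈ range n.succ,
              (n + 1).choose (i + 1) • ((⇑D)^[n + 1 - (i + 1)] p * (⇑D)^[i + 1] q)) +
            1 • ((⇑D)^[n + 1] p * (⇑D)^[0] q) := by
        simp_rw [Nat.choose_succ_succ, Nat.succ_sub_succ, add_smul, sum_add_distrib]
      _ = ∑ k ∈ range n.succ.succ,
            n.succ.choose k • ((⇑D)^[n.succ - k] p * (⇑D)^[k] q) := by
        rw [sum_range_succ' _ n.succ, Nat.choose_zero_right, tsub_zero]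
    congr
    refine (sum_range_succ' _ _).trans (congr_arg₂ (· + ·) ?_ ?_)
    · rw [sum_range_succ, Nat.choose_succ_self, zero_smul, add_zero]
      refine sum_congr rfl fun k hk => ?_
      rw [mem_range] at hk
      congr
      omega
    · rw [Nat.choose_zero_right, tsub_zero]

/-- **Lemma 2.1** (irreducibility of `E = π⁻¹(Γ)`): if `R` is a factorial affine
`ℂ`-algebra of dimension 3 with a nonzero locally nilpotent derivation `D` and invariant
subalgebra `A = ker D`, then a prime element `g` of `A` remains prime in `R`. -/
theorem prime_in_kernel_remains_prime
    (R : Type*) [CommRing R] [IsDomain R] [Algebra ℂ R]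
    [Algebra.FiniteType ℂ R] [UniqueFactorizationMonoid R]
    (hdim : ringKrullDim R = 3)
    (D : Derivation ℂ R R) (hD : D ≠ 0)
    (hln : ∀ r : R, ∃ n : ℕ, (⇑D)^[n] r = 0)
    (A : Subalgebra ℂ R) (hA : ∀ r : R, r ∈ A ↔ D r = 0)
    (g : A) (hg : Prime g) :
    Prime (g : R) := by
  haveI : CharZero R := charZero_of_injective_algebraMap (algebraMap ℂ R).injective
  -- once an iterate is zero, all later iterates are zero
  have hstab : ∀ (r : R) (k l : ℕ), k ≤ l → (⇑D)^[k] r = 0 → (⇑D)^[l] r = 0 := by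
    intro r k l hkl h
    obtain ⟨j, rfl⟩ := Nat.exists_eq_add_of_le hkl
    rw [add_comm, Function.iterate_add_apply, h]
    exact Function.iterate_fixed (map_zero D) j
  -- degree function
  have hdeg : ∀ r : R, r ≠ 0 → ∃ m : ℕ, (⇑D)^[m] r ≠ 0 ∧ ∀ l, m < l → (⇑D)^[l] r = 0 := by
    intro r hr
    classical
    have hex : ∃ n, (⇑D)^[n] r = 0 := hln r
    have hpos : 0 < Nat.find hex := by
      rcases Nat.eq_zero_or_pos (Nat.find hex) with h | h
      · exact absurd (by simpa [h] using Nat.find_spec hex) hr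
      · exact h
    refine ⟨Nat.find hex - 1, ?_, fun l hl => ?_⟩
    · exact Nat.find_min hex (by omega)
    · exact hstab r (Nat.find hex) l (by omega) (Nat.find_spec hex)
  -- factorial closedness
  have hfc : ∀ a b : R, a ≠ 0 → b ≠ 0 → D (a * b) = 0 → D a = 0 ∧ D b = 0 := by
    intro a b ha hb hab
    obtain ⟨m, hm, hm'⟩ := hdeg a ha
    obtain ⟨n, hn, hn'⟩ := hdeg b hb
    have key : (⇑D)^[m + n] (a * b) =
        ((m + n).choose n : ℕ) • ((⇑D)^[m] a * (⇑D)^[n] b) := by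
      rw [derivation_iterate_leibniz]
      rw [Finset.sum_eq_single n]
      · rw [Nat.add_sub_cancel]
      · intro k hk hkn
        rcases lt_or_gt_of_ne hkn with h | h
        · have : (⇑D)^[m + n - k] a = 0 := hm' _ (by omega)
          rw [this, zero_mul, smul_zero]
        · have : (⇑D)^[k] b = 0 := hn' _ h
          rw [this, mul_zero, smul_zero]
      · intro h; exact absurd (Finset.mem_range.mpr (by omega)) h
    rcases Nat.eq_zero_or_pos (m + n) with h0 | h0
    · have hm0 : m = 0 := by omega
      have hn0 : n = 0 := by omega
      constructor
      · have := hm' 1 (by omega); simpa using this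
      · have := hn' 1 (by omega); simpa using this
    · exfalso
      have hz : (⇑D)^[m + n] (a * b) = 0 := by
        have : (⇑D)^[1] (a * b) = 0 := by simpa using hab
        exact hstab _ 1 _ h0 this
      rw [key] at hz
      have hc : ((m + n).choose n : R) ≠ 0 := by
        exact_mod_cast Nat.cast_ne_zero.mpr (Nat.choose_pos (by omega : n ≤ m + n)).ne'
      rw [nsmul_eq_mul] at hz
      rcases mul_eq_zero.mp hz with h | h
      · exact hc h
      · rcases mul_eq_zero.mp h with h | h
        exacts [hm h, hn h]
  -- g ≠ 0 in R
  have hg0 : (g : R) ≠ 0 := by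
    intro h
    exact hg.ne_zero (Subtype.ext h)
  -- g not a unit in R
  have hgu : ¬ IsUnit (g : R) := by
    rintro ⟨u, hu⟩
    apply hg.not_unit
    have h1 : D ((g : R) * ↑u⁻¹) = 0 := by
      rw [← hu, Units.mul_inv]; exact D.map_one_eq_zero
    have hui : (↑u⁻¹ : R) ≠ 0 := u⁻¹.ne_zero
    have := (hfc _ _ hg0 hui h1).2
    refine IsUnit.of_mul_eq_one (a := g) ⟨(↑u⁻¹ : R), (hA _).mpr this⟩ ?_
    refine Subtype.ext ?_
    show (g : R) * ↑u⁻¹ = 1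
    rw [← hu, Units.mul_inv]
  -- irreducible in R
  have hirr : Irreducible (g : R) := by
    refine ⟨hgu, fun p q hpq => ?_⟩
    have hp : p ≠ 0 := by rintro rfl; rw [zero_mul] at hpq; exact hg0 hpq
    have hq : q ≠ 0 := by rintro rfl; rw [mul_zero] at hpq; exact hg0 hpq
    have hDg : D (g : R) = 0 := (hA _).mp g.2
    rw [hpq] at hDg
    obtain ⟨hDp, hDq⟩ := hfc _ _ hp hq hDg
    have hpA : p ∈ A := (hA _).mpr hDp
    have hqA : q ∈ A := (hA _).mpr hDq
    have : g = (⟨p, hpA⟩ : A) * ⟨q, hqA⟩ := Subtype.ext hpq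
    rcases hg.irreducible.isUnit_or_isUnit this with h | h
    · left
      rcases h with ⟨v, hv⟩
      refine IsUnit.of_mul_eq_one (a := p) ((v⁻¹ : Aˣ) : A) ?_
      have : ((⟨p, hpA⟩ : A) * ↑v⁻¹ : A) = 1 := by rw [← hv, Units.mul_inv]
      simpa using congrArg (Subtype.val) this
    · right
      rcases h with ⟨v, hv⟩
      refine IsUnit.of_mul_eq_one (a := q) ((v⁻¹ : Aˣ) : A) ?_
      have : ((⟨q, hqA⟩ : A) * ↑v⁻¹ : A) = 1 := by rw [← hv, Units.mul_inv]
      simpa using congrArg (Subtype.val) this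
  exact (UniqueFactorizationMonoid.irreducible_iff_prime).mp hirr
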